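/- Let H = (V, ℰ) be a β-acyclic hypergraph, let T be a join tree for H, and let S(H) be the separator hypergraph of H with respect to T. Then S(H) is β-acyclic. -/

import Mathlib

open SimpleGraph

/-- `T` is a join tree for the hypergraph whose hyperedge family is `E` (indexed by `ι`):
`T` is a tree on the hyperedges and, for every vertex `v`, the hyperedges containing `v`
induce a connected (nonempty sets being preconnected) subgraph of `T`. -/
def IsJoinTree {V ι : Type*} (E : ι → Finset V) (T : SimpleGraph ι) : Prop :=
  T.IsTree ∧ ∀ v : V, (T.induce {i | v ∈ E i}).Preconnected

/-- A hypergraph is acyclic if it admits a join tree. -/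
def IsAcyclicHG {V ι : Type*} (E : ι → Finset V) : Prop :=
  ∃ T : SimpleGraph ι, IsJoinTree E T
/-- A hypergraph is β-acyclic if every (nonempty) subfamily of its hyperedges forms an
acyclic hypergraph. -/
def BetaAcyclic {V ι : Type*} (E : ι → Finset V) : Prop :=
  ∀ s : Set ι, s.Nonempty → IsAcyclicHG fun i : s => E i
/-- The separator associated to an edge `{a, b}` of a join tree: `E a ∩ E b`. -/
def sepOf {V ι : Type*} [DecidableEq V] (E : ι → Finset V) : Sym2 ι → Finset V :=
  Sym2.lift ⟨fun a b => E a ∩ E b, fun a b => Finset.inter_comm _ _⟩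

namespace Stmt9Aux

/-- From a walk in an induced subgraph, extract a walk in the ambient graph whose
support stays in the inducing set. -/
lemma walk_of_induce {V' : Type*} {G : SimpleGraph V'} {s : Set V'} :
    ∀ {a b : ↥s}, (G.induce s).Walk a b → ∃ w : G.Walk a.1 b.1, ∀ k ∈ w.support, k ∈ s := by
  intro a b w
  induction w with
  | nil =>
    refine ⟨.nil, ?_⟩
    intro k hk
    simp only [SimpleGraph.Walk.support_nil, List.mem_singleton] at hk
    subst hk; exact Subtype.coe_prop _
  | @cons u c b h p ih =>
    obtain ⟨w', hw'⟩ := ih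
    have h' : G.Adj u.1 c.1 := h
    refine ⟨.cons (v := c.1) h' w', ?_⟩
    intro k hk
    simp only [SimpleGraph.Walk.support_cons, List.mem_cons] at hk
    rcases hk with rfl | hk
    · exact u.2
    · exact hw' k hk

lemma sym2_eq_of_mem {α : Type*} {z : Sym2 α} {u u' : α} (hu : u ∈ z) (hu' : u' ∈ z)
    (hne : u ≠ u') : z = s(u, u') := by
  induction z with
  | _ x y =>
    rw [Sym2.mem_iff] at hu hu'
    rcases hu with rfl | rfl <;> rcases hu' with rfl | rfl
    · exact absurd rfl hne
    · rfl
    · exact Sym2.eq_swap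
    · exact absurd rfl hne

variable {ι : Type*} {T : SimpleGraph ι}

/-- The underlying `Sym2` of an element of a set of edges of `T`. -/
def v2 (σ : Set ↥T.edgeSet) (e : ↥σ) : Sym2 ι := e.1.1

lemma v2_mem_edgeSet (σ : Set ↥T.edgeSet) (e : ↥σ) : v2 σ e ∈ T.edgeSet := e.1.2

lemma v2_inj (σ : Set ↥T.edgeSet) : Function.Injective (v2 σ) := by
  intro e f h
  exact Subtype.ext (Subtype.ext h)

/-- The graph `T` with the edges of `σ` deleted; its connected components are the
"classes" obtained by contracting all non-`σ` edges. -/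
def D (σ : Set ↥T.edgeSet) : SimpleGraph ι := T.deleteEdges (Subtype.val '' σ)

abbrev Cl (σ : Set ↥T.edgeSet) := (D σ).ConnectedComponent

def cl (σ : Set ↥T.edgeSet) (i : ι) : Cl σ := (D σ).connectedComponentMk i

/-- `e` is incident to the class `c`, with outside endpoint `b`. -/
def Out (σ : Set ↥T.edgeSet) (e : ↥σ) (c : Cl σ) (b : ι) : Prop :=
  ∃ a, v2 σ e = s(a, b) ∧ cl σ a = c

/-- `e` is incident to the class `c`. -/
def Att (σ : Set ↥T.edgeSet) (e : ↥σ) (c : Cl σ) : Prop := ∃ b, Out σ e c b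

/-- The set of outside endpoints of `σ`-edges incident to the class `c`. -/
def B (σ : Set ↥T.edgeSet) (c : Cl σ) : Set ι := {b | ∃ e, Out σ e c b}


lemma sym2_rep {α : Type*} (z : Sym2 α) : ∃ a b, z = s(a, b) := by
  induction z with
  | _ x y => exact ⟨x, y, rfl⟩

variable {σ : Set ↥T.edgeSet}

lemma bridge (hTa : T.IsAcyclic) (e : ↥σ) {a b : ι} (h : v2 σ e = s(a, b)) :
    ¬(T.deleteEdges {v2 σ e}).Reachable a b := by
  have hmem : v2 σ e ∈ T.edgeSet := v2_mem_edgeSet σ e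
  have hbr := (SimpleGraph.isAcyclic_iff_forall_edge_isBridge.mp hTa) hmem
  rw [h, SimpleGraph.isBridge_iff] at hbr
  rw [h]
  exact hbr

lemma adj_of_v2 (e : ↥σ) {a b : ι} (h : v2 σ e = s(a, b)) : T.Adj a b := by
  have hm := v2_mem_edgeSet σ e
  rw [h] at hm
  exact hm

lemma D_le (e : ↥σ) : D σ ≤ T.deleteEdges {v2 σ e} := by
  apply SimpleGraph.deleteEdges_anti
  intro z hz
  rw [Set.mem_singleton_iff] at hz
  exact ⟨e.1, e.2, hz.symm⟩

lemma reach_of_cl (e : ↥σ) {a a' : ι} (h : cl σ a = cl σ a') :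
    (T.deleteEdges {v2 σ e}).Reachable a a' :=
  (SimpleGraph.ConnectedComponent.eq.mp h).mono (D_le e)

lemma cl_ne (hTa : T.IsAcyclic) (e : ↥σ) {a b : ι} (h : v2 σ e = s(a, b)) :
    cl σ a ≠ cl σ b :=
  fun hc => bridge hTa e h (reach_of_cl e hc)

lemma adjD {e : ↥σ} (m : ↥σ) (hne : e ≠ m) {a b : ι} (h : v2 σ e = s(a, b)) :
    (T.deleteEdges {v2 σ m}).Adj a b := by
  rw [SimpleGraph.deleteEdges_adj]
  refine ⟨adj_of_v2 e h, ?_⟩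
  rw [Set.mem_singleton_iff]
  intro hz
  exact hne (v2_inj σ (h.trans hz))

lemma out_b_unique (hTa : T.IsAcyclic) (e : ↥σ) {c : Cl σ} {b b' : ι}
    (h : Out σ e c b) (h' : Out σ e c b') : b = b' := by
  obtain ⟨a, ha, hca⟩ := h
  obtain ⟨a', ha', hca'⟩ := h'
  rw [ha] at ha'
  rcases Sym2.eq_iff.mp ha' with ⟨rfl, rfl⟩ | ⟨h1, h2⟩
  · rfl
  · exfalso
    apply cl_ne hTa e ha
    rw [hca, ← hca', h2]

lemma out_e_unique (hTa : T.IsAcyclic) {c : Cl σ} {b : ι} {e f : ↥σ}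
    (h : Out σ e c b) (h' : Out σ f c b) : e = f := by
  by_contra hne
  obtain ⟨a, ha, hca⟩ := h
  obtain ⟨a', ha', hca'⟩ := h'
  have h1 : (T.deleteEdges {v2 σ e}).Reachable a a' := reach_of_cl e (hca.trans hca'.symm)
  have h2 : (T.deleteEdges {v2 σ e}).Adj a' b := adjD (e := f) e (fun hh => hne hh.symm) ha'
  exact bridge hTa e ha (h1.trans h2.reachable)

lemma att_iff (e : ↥σ) {a b : ι} (h : v2 σ e = s(a, b)) (c : Cl σ) :
    Att σ e c ↔ c = cl σ a ∨ c = cl σ b := by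
  constructor
  · rintro ⟨b', a', ha', hca'⟩
    rw [h] at ha'
    rcases Sym2.eq_iff.mp ha' with ⟨h1, h2⟩ | ⟨h1, h2⟩
    · left; rw [← hca', h1]
    · right; rw [← hca', h2]
  · rintro (rfl | rfl)
    · exact ⟨b, a, h, rfl⟩
    · exact ⟨a, b, h.trans Sym2.eq_swap, rfl⟩

lemma att_pair (hTa : T.IsAcyclic) {e f : ↥σ} (hne : e ≠ f) {ae be af bf : ι}
    (he : v2 σ e = s(ae, be)) (hf : v2 σ f = s(af, bf))
    (h1 : cl σ ae = cl σ af) (h2 : cl σ be = cl σ bf) : False := by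
  have r1 : (T.deleteEdges {v2 σ e}).Reachable ae af := reach_of_cl e h1
  have r2 : (T.deleteEdges {v2 σ e}).Adj af bf := adjD (e := f) e (fun hh => hne hh.symm) hf
  have r3 : (T.deleteEdges {v2 σ e}).Reachable bf be := reach_of_cl e h2.symm
  exact bridge hTa e he ((r1.trans r2.reachable).trans r3)

lemma att_two (hTa : T.IsAcyclic) {e f : ↥σ} (hne : e ≠ f) {c c' : Cl σ} (hcc : c ≠ c')
    (h1 : Att σ e c) (h2 : Att σ f c) (h3 : Att σ e c') (h4 : Att σ f c') : False := by
  obtain ⟨ae, be, he⟩ := sym2_rep (v2 σ e)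
  obtain ⟨af, bf, hf⟩ := sym2_rep (v2 σ f)
  rw [att_iff e he] at h1 h3
  rw [att_iff f hf] at h2 h4
  have hfswap : v2 σ f = s(bf, af) := hf.trans Sym2.eq_swap
  have heswap : v2 σ e = s(be, ae) := he.trans Sym2.eq_swap
  rcases h1 with rfl | rfl <;> rcases h3 with rfl | rfl
  · exact hcc rfl
  · rcases h2 with h2 | h2 <;> rcases h4 with h4 | h4
    · exact hcc (h2.trans h4.symm)
    · exact att_pair hTa hne he hf h2 h4
    · exact att_pair hTa hne he hfswap h2 h4
    · exact hcc (h2.trans h4.symm)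
  · rcases h2 with h2 | h2 <;> rcases h4 with h4 | h4
    · exact hcc (h2.trans h4.symm)
    · exact att_pair hTa hne heswap hf h2 h4
    · exact att_pair hTa hne heswap hfswap h2 h4
    · exact hcc (h2.trans h4.symm)
  · exact hcc rfl

/-- The choice of the (unique) σ-edge with outside endpoint `x` at class `c`. -/
noncomputable def psi (σ : Set ↥T.edgeSet) (c : Cl σ) (x : ↥(B σ c)) : ↥σ :=
  x.2.choose

lemma psi_spec (σ : Set ↥T.edgeSet) (c : Cl σ) (x : ↥(B σ c)) : Out σ (psi σ c x) c ↑x :=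
  x.2.choose_spec

lemma psi_eq (hTa : T.IsAcyclic) {c : Cl σ} {x : ↥(B σ c)} {e : ↥σ} (h : Out σ e c ↑x) :
    psi σ c x = e :=
  out_e_unique hTa (psi_spec σ c x) h

/-- `e` and `f` are joined through the local tree of class `c`. -/
def Step (σ : Set ↥T.edgeSet) (Tc : ∀ c : Cl σ, SimpleGraph ↥(B σ c)) (e f : ↥σ)
    (c : Cl σ) : Prop :=
  ∃ x y : ↥(B σ c), Out σ e c ↑x ∧ Out σ f c ↑y ∧ (Tc c).Adj x y

/-- The glued graph on `σ`: union of all local trees. -/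
def R (σ : Set ↥T.edgeSet) (Tc : ∀ c : Cl σ, SimpleGraph ↥(B σ c)) : SimpleGraph ↥σ where
  Adj e f := e ≠ f ∧ ∃ c, Step σ Tc e f c
  symm := ⟨by
    rintro e f ⟨hne, c, x, y, h1, h2, h3⟩
    exact ⟨hne.symm, c, y, x, h2, h1, h3.symm⟩⟩
  loopless := ⟨fun e h => h.1 rfl⟩

attribute [reducible] Out Step R

variable {Tc : ∀ c : Cl σ, SimpleGraph ↥(B σ c)}

lemma adj_R (hTa : T.IsAcyclic) {c : Cl σ} {x y : ↥(B σ c)} (h : (Tc c).Adj x y) :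
    (R σ Tc).Adj (psi σ c x) (psi σ c y) := by
  refine ⟨?_, c, x, y, psi_spec σ c x, psi_spec σ c y, h⟩
  intro he
  have hxy : (x : ι) = y := out_b_unique hTa _ (psi_spec σ c x) (he ▸ psi_spec σ c y)
  exact h.ne (Subtype.ext hxy)

/-- The gluing map as a graph homomorphism from a local tree into `R`. -/
noncomputable def homPsi (hTa : T.IsAcyclic) (Tc : ∀ c : Cl σ, SimpleGraph ↥(B σ c))
    (c : Cl σ) : Tc c →g R σ Tc :=
  ⟨psi σ c, fun h => adj_R hTa h⟩

@[simp] lemma homPsi_apply (hTa : T.IsAcyclic) (Tc : ∀ c : Cl σ, SimpleGraph ↥(B σ c))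
    (c : Cl σ) (x : ↥(B σ c)) : homPsi hTa Tc c x = psi σ c x := rfl

lemma loc_reach (hTa : T.IsAcyclic)
    (hTc : ∀ c, (B σ c).Nonempty → (Tc c).IsTree) {c : Cl σ} {e f : ↥σ}
    (he : Att σ e c) (hf : Att σ f c) : (R σ Tc).Reachable e f := by
  obtain ⟨be, hbe⟩ := he
  obtain ⟨bf, hbf⟩ := hf
  have hbeB : be ∈ B σ c := ⟨e, hbe⟩
  have hbfB : bf ∈ B σ c := ⟨f, hbf⟩
  have hBne : (B σ c).Nonempty := ⟨be, hbeB⟩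
  have hr := (hTc c hBne).isConnected.preconnected ⟨be, hbeB⟩ ⟨bf, hbfB⟩
  have hmapped := hr.map (homPsi hTa Tc c)
  rw [homPsi_apply, homPsi_apply] at hmapped
  rwa [psi_eq hTa (x := ⟨be, hbeB⟩) hbe, psi_eq hTa (x := ⟨bf, hbfB⟩) hbf] at hmapped

section WithVertices

variable {V : Type*} [DecidableEq V] {E : ι → Finset V}

lemma mem_sepOf {v : V} {a b : ι} : v ∈ sepOf E s(a, b) ↔ v ∈ E a ∧ v ∈ E b := by
  rw [sepOf, Sym2.lift_mk, Finset.mem_inter]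

/-- If `v` lies in the outside endpoint of the σ-edge `f = {a, x}` at a class containing a
`v`-node `α₀`, then `v` also lies in the inside endpoint `a`. -/
lemma mem_inside (hTa : T.IsAcyclic) (hTj : ∀ v : V, (T.induce {i | v ∈ E i}).Preconnected)
    {v : V} (f : ↥σ) {a x α₀ : ι} (hf : v2 σ f = s(a, x)) (hcl : cl σ a = cl σ α₀)
    (hvx : v ∈ E x) (hvα : v ∈ E α₀) : v ∈ E a := by
  obtain ⟨w0⟩ := hTj v ⟨x, hvx⟩ ⟨α₀, hvα⟩
  obtain ⟨w, hw⟩ := walk_of_induce w0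
  by_cases hmem : s(a, x) ∈ w.edges
  · exact hw a (w.fst_mem_support_of_mem_edges hmem)
  · exfalso
    have hw' : ∀ z ∈ w.edges, z ∉ ({v2 σ f} : Set (Sym2 ι)) := by
      intro z hz hzz
      rw [Set.mem_singleton_iff] at hzz
      rw [hzz, hf] at hz
      exact hmem hz
    have h1 : (T.deleteEdges {v2 σ f}).Reachable x α₀ := ⟨w.toDeleteEdges _ hw'⟩
    have h2 : (T.deleteEdges {v2 σ f}).Reachable α₀ a := reach_of_cl f hcl.symm
    exact bridge hTa f hf ((h1.trans h2).symm)

lemma loc_reachv (hTa : T.IsAcyclic) (hTj : ∀ v : V, (T.induce {i | v ∈ E i}).Preconnected)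
    (hTc : ∀ c, (B σ c).Nonempty → IsJoinTree (fun i : ↥(B σ c) => E ↑i) (Tc c))
    {v : V} {c : Cl σ} {e f : ↥σ}
    (he : Att σ e c) (hf : Att σ f c)
    (hve : v ∈ sepOf E (v2 σ e)) (hvf : v ∈ sepOf E (v2 σ f)) :
    ((R σ Tc).induce {g : ↥σ | v ∈ sepOf E (v2 σ g)}).Reachable ⟨e, hve⟩ ⟨f, hvf⟩ := by
  obtain ⟨be, αe, hbe, hclαe⟩ := he
  obtain ⟨bf, αf, hbf, hclαf⟩ := hf
  have hvae : v ∈ E αe ∧ v ∈ E be := by rw [hbe, mem_sepOf] at hve; exact hve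
  have hvaf : v ∈ E αf ∧ v ∈ E bf := by rw [hbf, mem_sepOf] at hvf; exact hvf
  have hbeB : be ∈ B σ c := ⟨e, αe, hbe, hclαe⟩
  have hbfB : bf ∈ B σ c := ⟨f, αf, hbf, hclαf⟩
  have hBne : (B σ c).Nonempty := ⟨be, hbeB⟩
  have hjc := (hTc c hBne).2 v
  have hmm : ∀ x : ↥(B σ c), v ∈ E (x : ι) → v ∈ sepOf E (v2 σ (psi σ c x)) := by
    intro x hx
    obtain ⟨a, ha, hcla⟩ := psi_spec σ c x
    rw [ha, mem_sepOf]
    exact ⟨mem_inside hTa hTj (psi σ c x) ha (hcla.trans hclαe.symm) hx hvae.1, hx⟩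
  have hr := hjc ⟨⟨be, hbeB⟩, hvae.2⟩ ⟨⟨bf, hbfB⟩, hvaf.2⟩
  have hmapped := hr.map (⟨fun z => ⟨psi σ c z.1, hmm z.1 z.2⟩,
    fun h => adj_R hTa h⟩ :
      ((Tc c).induce {i : ↥(B σ c) | v ∈ E ↑i}) →g
        ((R σ Tc).induce {g : ↥σ | v ∈ sepOf E (v2 σ g)}))
  have h1 : psi σ c ⟨be, hbeB⟩ = e := psi_eq hTa (x := ⟨be, hbeB⟩) ⟨αe, hbe, hclαe⟩
  have h2 : psi σ c ⟨bf, hbfB⟩ = f := psi_eq hTa (x := ⟨bf, hbfB⟩) ⟨αf, hbf, hclαf⟩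
  have e1 : (⟨psi σ c ⟨be, hbeB⟩, hmm _ hvae.2⟩ :
      ↥{g : ↥σ | v ∈ sepOf E (v2 σ g)}) = ⟨e, hve⟩ := Subtype.ext h1
  have e2 : (⟨psi σ c ⟨bf, hbfB⟩, hmm _ hvaf.2⟩ :
      ↥{g : ↥σ | v ∈ sepOf E (v2 σ g)}) = ⟨f, hvf⟩ := Subtype.ext h2
  rwa [show (⟨fun z => ⟨psi σ c z.1, hmm z.1 z.2⟩, fun h => adj_R hTa h⟩ :
      ((Tc c).induce {i : ↥(B σ c) | v ∈ E ↑i}) →g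
        ((R σ Tc).induce {g : ↥σ | v ∈ sepOf E (v2 σ g)}))
      ⟨⟨be, hbeB⟩, hvae.2⟩ = ⟨e, hve⟩ from e1 ▸ rfl,
    show (⟨fun z => ⟨psi σ c z.1, hmm z.1 z.2⟩, fun h => adj_R hTa h⟩ :
      ((Tc c).induce {i : ↥(B σ c) | v ∈ E ↑i}) →g
        ((R σ Tc).induce {g : ↥σ | v ∈ sepOf E (v2 σ g)}))
      ⟨⟨bf, hbfB⟩, hvaf.2⟩ = ⟨f, hvf⟩ from e2 ▸ rfl] at hmapped

end WithVertices

section Global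

variable {V : Type*} [DecidableEq V] {E : ι → Finset V}

omit [DecidableEq V] in
lemma glob_reach (hTa : T.IsAcyclic)
    (hTc : ∀ c, (B σ c).Nonempty → (Tc c).IsTree) :
    ∀ {x y : ι} (w : T.Walk x y) (e f : ↥σ),
      Att σ e (cl σ x) → Att σ f (cl σ y) → (R σ Tc).Reachable e f := by
  intro x y w
  induction w with
  | nil =>
    intro e f he hf
    exact loc_reach hTa hTc he hf
  | @cons x x' y h p ih =>
    intro e f he hf
    by_cases hg : s(x, x') ∈ (Subtype.val '' σ : Set (Sym2 ι))
    · obtain ⟨g0, hg0σ, hg0⟩ := hg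
      have hgx : Att σ (⟨g0, hg0σ⟩ : ↥σ) (cl σ x) := ⟨x', x, hg0, rfl⟩
      have hgx' : Att σ (⟨g0, hg0σ⟩ : ↥σ) (cl σ x') := ⟨x, x', hg0.trans Sym2.eq_swap, rfl⟩
      exact (loc_reach hTa hTc he hgx).trans (ih ⟨g0, hg0σ⟩ f hgx' hf)
    · have hD : (D σ).Adj x x' := SimpleGraph.deleteEdges_adj.mpr ⟨h, hg⟩
      have hcl : cl σ x = cl σ x' := SimpleGraph.ConnectedComponent.eq.mpr hD.reachable
      exact ih e f (hcl ▸ he) hf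

lemma glob_reachv (hTa : T.IsAcyclic)
    (hTj : ∀ v : V, (T.induce {i | v ∈ E i}).Preconnected)
    (hTc : ∀ c, (B σ c).Nonempty → IsJoinTree (fun i : ↥(B σ c) => E ↑i) (Tc c)) {v : V} :
    ∀ {x y : ι} (w : T.Walk x y), (∀ k ∈ w.support, v ∈ E k) →
      ∀ (e f : ↥σ) (hve : v ∈ sepOf E (v2 σ e)) (hvf : v ∈ sepOf E (v2 σ f)),
      Att σ e (cl σ x) → Att σ f (cl σ y) →
      ((R σ Tc).induce {g : ↥σ | v ∈ sepOf E (v2 σ g)}).Reachable ⟨e, hve⟩ ⟨f, hvf⟩ := by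
  intro x y w
  induction w with
  | nil =>
    intro _ e f hve hvf he hf
    exact loc_reachv hTa hTj hTc he hf hve hvf
  | @cons x x' y h p ih =>
    intro hsupp e f hve hvf he hf
    by_cases hg : s(x, x') ∈ (Subtype.val '' σ : Set (Sym2 ι))
    · obtain ⟨g0, hg0σ, hg0⟩ := hg
      have hgx : Att σ (⟨g0, hg0σ⟩ : ↥σ) (cl σ x) := ⟨x', x, hg0, rfl⟩
      have hgx' : Att σ (⟨g0, hg0σ⟩ : ↥σ) (cl σ x') := ⟨x, x', hg0.trans Sym2.eq_swap, rfl⟩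
      have hvg : v ∈ sepOf E (v2 σ (⟨g0, hg0σ⟩ : ↥σ)) := by
        rw [show v2 σ (⟨g0, hg0σ⟩ : ↥σ) = s(x, x') from hg0, mem_sepOf]
        exact ⟨hsupp x (by simp), hsupp x' (by simp [SimpleGraph.Walk.start_mem_support])⟩
      have hstep := loc_reachv hTa hTj hTc (Tc := Tc) he hgx hve hvg
      have hrest := ih (fun k hk => hsupp k (by simp [hk])) ⟨g0, hg0σ⟩ f hvg hvf hgx' hf
      exact hstep.trans hrest
    · have hD : (D σ).Adj x x' := SimpleGraph.deleteEdges_adj.mpr ⟨h, hg⟩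
      have hcl : cl σ x = cl σ x' := SimpleGraph.ConnectedComponent.eq.mpr hD.reachable
      exact ih (fun k hk => hsupp k (by simp [hk])) e f hve hvf (hcl ▸ he) hf

end Global

section Acyclic

lemma reach_out (hTa : T.IsAcyclic) {m : ↥σ} :
    ∀ {f g : ↥σ} (w : (R σ Tc).Walk f g), (∀ n ∈ w.support, n ≠ m) →
      ∀ {u u' : ι}, u ∈ v2 σ f → u' ∈ v2 σ g →
      (T.deleteEdges {v2 σ m}).Reachable u u' := by
  intro f g w
  induction w with
  | nil =>
    rename_i f0
    intro hs u u' hu hu'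
    by_cases huu : u = u'
    · exact huu ▸ SimpleGraph.Reachable.refl u
    · have hfs : v2 σ f0 = s(u, u') := sym2_eq_of_mem hu hu' huu
      have hfm : f0 ≠ m := hs f0 (by simp)
      exact (adjD (e := f0) m hfm hfs).reachable
  | @cons f f₁ g h p ih =>
    intro hs u u' hu hu'
    obtain ⟨hne, c, x, y, ⟨α, hα, hclα⟩, ⟨α₁, hα₁, hclα₁⟩, hadj⟩ := h
    have hfm : f ≠ m := hs f (by simp)
    have h1 : (T.deleteEdges {v2 σ m}).Reachable u α := by
      rw [hα, Sym2.mem_iff] at hu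
      rcases hu with rfl | rfl
      · exact SimpleGraph.Reachable.refl _
      · exact (adjD (e := f) m hfm hα).reachable.symm
    have h2 : (T.deleteEdges {v2 σ m}).Reachable α α₁ :=
      reach_of_cl m (hclα.trans hclα₁.symm)
    have hmem1 : α₁ ∈ v2 σ f₁ := by rw [hα₁]; exact Sym2.mem_mk_left _ _
    have h3 := ih (fun n hn => hs n (by simp [hn])) hmem1 hu'
    exact (h1.trans h2).trans h3

lemma walk_to_local (hTa : T.IsAcyclic) {c : Cl σ} :
    ∀ {f g : ↥σ} (w : (R σ Tc).Walk f g), (∀ n ∈ w.support, Att σ n c) →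
      ∀ (x y : ↥(B σ c)), Out σ f c ↑x → Out σ g c ↑y →
      ∃ w' : (Tc c).Walk x y, ∀ z ∈ w'.edges, ∃ (n₁ n₂ : ↥σ) (x₁ x₂ : ↥(B σ c)),
        s(n₁, n₂) ∈ w.edges ∧ Out σ n₁ c ↑x₁ ∧ Out σ n₂ c ↑x₂ ∧ z = s(x₁, x₂) := by
  intro f g w
  induction w with
  | nil =>
    intro _ x y hx hy
    have hxy : x = y := Subtype.ext (out_b_unique hTa _ hx hy)
    subst hxy
    exact ⟨.nil, by simp⟩
  | @cons f f₁ g h p ih =>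
    intro hall x y hx hy
    obtain ⟨hne, c₀, x₀, y₀, hx₀, hy₀, hadj⟩ := h
    have hfc : Att σ f c := hall f (by simp)
    have hf₁c : Att σ f₁ c := hall f₁ (by simp)
    have hc : c₀ = c := by
      by_contra hcc
      exact att_two hTa hne (Ne.symm hcc) hfc hf₁c ⟨_, hx₀⟩ ⟨_, hy₀⟩
    subst hc
    have hxx : x₀ = x := Subtype.ext (out_b_unique hTa _ hx₀ hx)
    subst hxx
    obtain ⟨w', hw'⟩ := ih (fun n hn => hall n (by simp [hn])) y₀ y hy₀ hy
    refine ⟨.cons hadj w', ?_⟩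
    intro z hz
    rw [SimpleGraph.Walk.edges_cons, List.mem_cons] at hz
    rcases hz with rfl | hz
    · exact ⟨f, f₁, x₀, y₀, by simp, hx₀, hy₀, rfl⟩
    · obtain ⟨n₁, n₂, x₁, x₂, hmem, hh1, hh2, hh3⟩ := hw' z hz
      exact ⟨n₁, n₂, x₁, x₂, by simp [hmem], hh1, hh2, hh3⟩

lemma search :
    ∀ {f g : ↥σ} (w : (R σ Tc).Walk f g) (c₀ : Cl σ), Att σ f c₀ →
      (∀ n ∈ w.support, Att σ n c₀) ∨
      (∃ (m' : ↥σ) (c' : Cl σ), c' ≠ c₀ ∧ Step σ Tc f m' c' ∧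
        ∃ post : (R σ Tc).Walk m' g, w.support = f :: post.support) ∨
      (∃ (mp m m' : ↥σ) (c' : Cl σ), c' ≠ c₀ ∧ Step σ Tc mp m c₀ ∧ Step σ Tc m m' c' ∧
        ∃ (pre : (R σ Tc).Walk f mp) (post : (R σ Tc).Walk m' g),
          w.support = pre.support ++ m :: post.support) := by
  intro f g w
  induction w with
  | nil =>
    intro c₀ hf
    left
    intro n hn
    simp only [SimpleGraph.Walk.support_nil, List.mem_singleton] at hn
    subst hn; exact hf
  | @cons f f₁ g h p ih =>
    intro c₀ hf
    obtain ⟨hne, c, hstep⟩ := h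
    by_cases hc : c = c₀
    · subst hc
      obtain ⟨x, y, hx, hy, hadj⟩ := hstep
      rcases ih c (⟨_, hy⟩ : Att σ f₁ c) with hall | ⟨m', c', hc', hstep', post, hsupp⟩ |
          ⟨mp, m, m', c', hc', h1, h2, pre, post, hsupp⟩
      · left
        intro n hn
        rw [SimpleGraph.Walk.support_cons, List.mem_cons] at hn
        rcases hn with rfl | hn
        · exact hf
        · exact hall n hn
      · right; right
        exact ⟨f, f₁, m', c', hc', ⟨x, y, hx, hy, hadj⟩, hstep', .nil, post,
          by simp [hsupp]⟩
      · right; right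
        refine ⟨mp, m, m', c', hc', h1, h2,
          .cons ⟨hne, c, x, y, hx, hy, hadj⟩ pre, post, ?_⟩
        simp [hsupp]
    · right; left
      exact ⟨f₁, c, hc, hstep, p, by simp⟩

lemma final_contra (hTa : T.IsAcyclic) {mp m m' : ↥σ} {c₀ c' : Cl σ} (hc' : c' ≠ c₀)
    (h1 : Step σ Tc mp m c₀) (h2 : Step σ Tc m m' c')
    (W : (R σ Tc).Walk m' mp) (hW : ∀ n ∈ W.support, n ≠ m) : False := by
  obtain ⟨xp, ym, hxp, hym, hadj1⟩ := h1
  obtain ⟨xm, ym', hxm, hym', hadj2⟩ := h2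
  obtain ⟨αp, hαp, hclαp⟩ := hxp
  obtain ⟨am, ham, hclam⟩ := hym
  obtain ⟨am', ham', hclam'⟩ := hxm
  obtain ⟨α', hα', hclα'⟩ := hym'
  have hmm : am = (xm : ι) ∧ (ym : ι) = am' := by
    rcases Sym2.eq_iff.mp (ham.symm.trans ham') with ⟨hh1, hh2⟩ | ⟨hh1, hh2⟩
    · exfalso; apply hc'; rw [← hclam', ← hclam, hh1]
    · exact ⟨hh1, hh2⟩
  have hu : α' ∈ v2 σ m' := by rw [hα']; exact Sym2.mem_mk_left _ _
  have hu' : αp ∈ v2 σ mp := by rw [hαp]; exact Sym2.mem_mk_left _ _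
  have hr := reach_out hTa W hW hu hu'
  have r1 : (T.deleteEdges {v2 σ m}).Reachable am' α' :=
    reach_of_cl m (hclam'.trans hclα'.symm)
  have r2 : (T.deleteEdges {v2 σ m}).Reachable αp am :=
    reach_of_cl m (hclαp.trans hclam.symm)
  have hvm : v2 σ m = s(am, am') := by rw [ham, hmm.2]
  exact bridge hTa m hvm ((r2.symm.trans hr.symm).trans r1.symm)

lemma R_acyclic (hTa : T.IsAcyclic)
    (hTc : ∀ c, (B σ c).Nonempty → (Tc c).IsTree) : (R σ Tc).IsAcyclic := by
  intro e p hp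
  cases p with
  | nil => exact SimpleGraph.Walk.IsCycle.not_of_nil hp
  | @cons _ x₁ _ h₀ q =>
    have h₀' := h₀
    obtain ⟨hne₀, c₀, hstep₀⟩ := h₀'
    have hqnodup : q.support.Nodup := by
      have h := hp.support_nodup
      simpa [SimpleGraph.Walk.support_cons] using h
    have hedge : s(e, x₁) ∉ q.edges := by
      have h := hp.edges_nodup
      rw [SimpleGraph.Walk.edges_cons] at h
      exact (List.nodup_cons.mp h).1
    obtain ⟨x₀, y₀, hx₀, hy₀, hadj₀⟩ := hstep₀
    rcases search (σ := σ) (Tc := Tc) q c₀ ⟨_, hy₀⟩ with hall |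
        ⟨m', c', hc', hstep₁, post, hsupp⟩ |
        ⟨mp, m, m', c', hc', hstepc, hstep', pre, post, hsupp⟩
    · -- all of the cycle is attached to the class c₀
      obtain ⟨w', hw'⟩ := walk_to_local hTa q hall y₀ x₀ hy₀ hx₀
      have hBne : (B σ c₀).Nonempty := ⟨↑x₀, ⟨e, hx₀⟩⟩
      have htree := hTc c₀ hBne
      have hmemE : s(x₀, y₀) ∈ (Tc c₀).edgeSet := hadj₀
      have hbr := (SimpleGraph.isAcyclic_iff_forall_edge_isBridge.mp htree.IsAcyclic) hmemE
      rw [SimpleGraph.isBridge_iff] at hbr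
      apply hbr
      have hnotin : ∀ z ∈ w'.edges, z ∉ ({s(x₀, y₀)} : Set (Sym2 ↥(B σ c₀))) := by
        intro z hz hzz
        rw [Set.mem_singleton_iff] at hzz
        obtain ⟨n₁, n₂, z₁, z₂, hmem, hh1, hh2, hh3⟩ := hw' z hz
        rw [hzz] at hh3
        rcases Sym2.eq_iff.mp hh3.symm with ⟨ha, hb⟩ | ⟨ha, hb⟩
        · have he1 : n₁ = e := out_e_unique hTa (ha ▸ hh1) hx₀
          have he2 : n₂ = x₁ := out_e_unique hTa (hb ▸ hh2) hy₀
          rw [he1, he2] at hmem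
          exact hedge hmem
        · have he1 : n₁ = x₁ := out_e_unique hTa (ha ▸ hh1) hy₀
          have he2 : n₂ = e := out_e_unique hTa (hb ▸ hh2) hx₀
          rw [he1, he2] at hmem
          rw [Sym2.eq_swap] at hmem
          exact hedge hmem
      exact ⟨(w'.toDeleteEdges _ hnotin).reverse⟩
    · -- the class switches right after x₁
      have hpostm : ∀ n ∈ post.support, n ≠ x₁ := by
        intro n hn heq
        subst heq
        rw [hsupp] at hqnodup
        exact (List.nodup_cons.mp hqnodup).1 hn
      exact final_contra hTa hc' ⟨x₀, y₀, hx₀, hy₀, hadj₀⟩ hstep₁ post hpostm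
    · -- the class switches at an interior node m
      rw [hsupp] at hqnodup
      have hmpre : m ∉ pre.support := fun hmem =>
        (List.nodup_append.mp hqnodup).2.2 m hmem m List.mem_cons_self rfl
      have hmpost : m ∉ post.support :=
        (List.nodup_cons.mp (List.nodup_append.mp hqnodup).2.1).1
      have hW : ∀ n ∈ (post.append
          (SimpleGraph.Walk.cons (⟨hne₀, c₀, x₀, y₀, hx₀, hy₀, hadj₀⟩ :
            (R σ Tc).Adj e x₁) pre)).support, n ≠ m := by
        intro n hn heq
        subst heq
        rw [SimpleGraph.Walk.mem_support_append_iff] at hn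
        rcases hn with hn | hn
        · exact hmpost hn
        · rw [SimpleGraph.Walk.support_cons, List.mem_cons] at hn
          rcases hn with rfl | hn
          · exact hmpost post.end_mem_support
          · exact hmpre hn
      exact final_contra hTa hc' hstepc hstep'
        (post.append (.cons ⟨hne₀, c₀, x₀, y₀, hx₀, hy₀, hadj₀⟩ pre)) hW

end Acyclic

end Stmt9Aux

theorem stmt9 {V ι : Type*} [Fintype V] [Fintype ι] [DecidableEq V]
    (E : ι → Finset V)
    (hne : ∀ i, (E i).Nonempty) (hcov : ∀ v, ∃ i, v ∈ E i)
    (hbeta : BetaAcyclic E)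
    (T : SimpleGraph ι) (hT : IsJoinTree E T) :
    BetaAcyclic fun e : T.edgeSet => sepOf E (e : Sym2 ι) := by
  classical
  obtain ⟨hTtree, hTj⟩ := hT
  have hTa : T.IsAcyclic := hTtree.IsAcyclic
  intro σ hσ
  have hchoice : ∀ c : Stmt9Aux.Cl σ, ∃ G' : SimpleGraph ↥(Stmt9Aux.B σ c),
      (Stmt9Aux.B σ c).Nonempty → IsJoinTree (fun i : ↥(Stmt9Aux.B σ c) => E ↑i) G' := by
    intro c
    by_cases h : (Stmt9Aux.B σ c).Nonempty
    · obtain ⟨G', hG'⟩ := hbeta (Stmt9Aux.B σ c) h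
      exact ⟨G', fun _ => hG'⟩
    · exact ⟨⊥, fun hh => absurd hh h⟩
  choose Tc hTc using hchoice
  have hTcTree : ∀ c, (Stmt9Aux.B σ c).Nonempty → (Tc c).IsTree := fun c h => (hTc c h).1
  refine ⟨Stmt9Aux.R σ Tc, ⟨?_, ?_⟩, ?_⟩
  · rw [SimpleGraph.connected_iff]
    refine ⟨?_, hσ.to_subtype⟩
    intro e f
    obtain ⟨a, b, hab⟩ := Stmt9Aux.sym2_rep (Stmt9Aux.v2 σ e)
    obtain ⟨a', b', hab'⟩ := Stmt9Aux.sym2_rep (Stmt9Aux.v2 σ f)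
    obtain ⟨w⟩ := hTtree.isConnected.preconnected a a'
    exact Stmt9Aux.glob_reach hTa hTcTree w e f ⟨b, a, hab, rfl⟩ ⟨b', a', hab', rfl⟩
  · exact Stmt9Aux.R_acyclic hTa hTcTree
  · intro v eu fu
    obtain ⟨e, hve⟩ := eu
    obtain ⟨f, hvf⟩ := fu
    have hve' : v ∈ sepOf E (Stmt9Aux.v2 σ e) := hve
    have hvf' : v ∈ sepOf E (Stmt9Aux.v2 σ f) := hvf
    obtain ⟨ae, be, he⟩ := Stmt9Aux.sym2_rep (Stmt9Aux.v2 σ e)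
    obtain ⟨af, bf, hf⟩ := Stmt9Aux.sym2_rep (Stmt9Aux.v2 σ f)
    have hvee : v ∈ E ae ∧ v ∈ E be := by
      rw [he, Stmt9Aux.mem_sepOf] at hve'; exact hve'
    have hvff : v ∈ E af ∧ v ∈ E bf := by
      rw [hf, Stmt9Aux.mem_sepOf] at hvf'; exact hvf'
    obtain ⟨w0⟩ := hTj v ⟨ae, hvee.1⟩ ⟨af, hvff.1⟩
    obtain ⟨w, hw⟩ := Stmt9Aux.walk_of_induce w0
    exact Stmt9Aux.glob_reachv hTa hTj hTc w hw e f hve hvf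
      ⟨be, ae, he, rfl⟩ ⟨bf, af, hf, rfl⟩
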